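/- For every r ≥ 2, p, k ∈ ℤ and α ∈ H_{p,k−p}, one has α ∈ Z_r^{p,k} if and only if: (i) α = d_0 β + Π_0 α for some β ∈ H_{p,k−p−1}, and (ii) there exist harmonic elements ω̄_{p+i} ∈ ker d_0 ∩ ker d_0* ∩ H_{p+i,k−p−i} for i = 1, …, r−2 such that for each i = 1, …, r−1 one has d_c^i(Π_0 α) = ∑_{j=1}^{i−1} d_c^{i−j}(ω̄_{p+j}) (for i = 1 the empty sum gives d_c^1(Π_0 α) = 0). -/

import Mathlib

open scoped InnerProductSpace

namespace MemZAux
open Finset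

variable {H : Type*} [NormedAddCommGroup H] [InnerProductSpace ℝ H]

lemma tri_swap {M : Type*} [AddCommMonoid M] (n : ℕ) (f : ℕ → ℕ → M) :
    ∑ j ∈ Ico 1 n, ∑ i ∈ Ico 1 (n - j), f j i
      = ∑ i ∈ Ico 1 n, ∑ j ∈ Ico 1 (n - i), f j i :=
  Finset.sum_comm' (by intro x y; simp only [mem_Ico]; omega)

lemma tri_swap2 {M : Type*} [AddCommMonoid M] (n : ℕ) (f : ℕ → ℕ → M) :
    ∑ j ∈ Ico 1 n, ∑ i ∈ Ico 1 (n + 1 - j), f j i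
      = ∑ i ∈ Ico 1 n, ∑ j ∈ Ico 1 (n + 1 - i), f j i :=
  Finset.sum_comm' (by intro x y; simp only [mem_Ico]; omega)

lemma tri_swap3 {M : Type*} [AddCommMonoid M] (n : ℕ) (f : ℕ → ℕ → M) :
    ∑ j ∈ range n, ∑ i ∈ Ico 1 (n - j), f j i
      = ∑ i ∈ Ico 1 n, ∑ j ∈ range (n - i), f j i :=
  Finset.sum_comm' (by intro x y; simp only [mem_Ico, mem_range]; omega)

lemma tri_swap0 {M : Type*} [AddCommMonoid M] (n : ℕ) (f : ℕ → ℕ → M) :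
    ∑ j ∈ range n, ∑ i ∈ range (n - j), f j i
      = ∑ i ∈ range n, ∑ j ∈ range (n - i), f j i :=
  Finset.sum_comm' (by intro x y; simp only [mem_range]; omega)

def W (D : ℕ → H →L[ℝ] H) (g : H →L[ℝ] H) (z : ℕ → H) : ℕ → H
  | m => z m - ∑ i ∈ (Finset.Ico 1 m).attach, D (m - i.1) (g (W D g z i.1))
  decreasing_by exact (Finset.mem_Ico.mp i.2).2

lemma W_eq (D : ℕ → H →L[ℝ] H) (g : H →L[ℝ] H) (z : ℕ → H) (m : ℕ) :
    W D g z m = z m - ∑ i ∈ Ico 1 m, D (m - i) (g (W D g z i)) := by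
  rw [W, Finset.sum_attach (Finset.Ico 1 m) (fun i => D (m - i) (g (W D g z i)))]


variable (D : ℕ → H →L[ℝ] H) (g : H →L[ℝ] H) (P : ℕ → H →L[ℝ] H) (Pi0 : H →L[ℝ] H)

/-- pointwise multicomplex relation -/
lemma R_pt (hDD : ∀ n : ℕ, ∑ i ∈ Finset.range (n + 1), (D i).comp (D (n - i)) = 0)
    (n : ℕ) (x : H) : ∑ i ∈ range (n + 1), D i (D (n - i) x) = 0 := by
  have := congrArg (fun T : H →L[ℝ] H => T x) (hDD n)
  simpa [ContinuousLinearMap.sum_apply] using this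

/-- `D 0 (D n x)` in terms of the rest -/
lemma R_bot (hDD : ∀ n : ℕ, ∑ i ∈ Finset.range (n + 1), (D i).comp (D (n - i)) = 0)
    (n : ℕ) (x : H) :
    D 0 (D n x) = -∑ i ∈ Ico 1 (n + 1), D i (D (n - i) x) := by
  have h := R_pt D hDD n x
  rw [range_eq_Ico, Finset.sum_eq_sum_Ico_succ_bot (Nat.succ_pos n)] at h
  simp only [Nat.sub_zero] at h
  simpa using eq_neg_of_add_eq_zero_left h


/-- reflected relation: `∑_{l<m} D (m-l) (D l x) = - D 0 (D m x)` -/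
lemma R_top (hDD : ∀ n : ℕ, ∑ i ∈ Finset.range (n + 1), (D i).comp (D (n - i)) = 0)
    (m : ℕ) (x : H) :
    ∑ l ∈ range m, D (m - l) (D l x) = -(D 0 (D m x)) := by
  have h2 : ∑ l ∈ range (m + 1), D (m - l) (D l x) = 0 := by
    have := Finset.sum_range_reflect (fun i => D i (D (m - i) x)) (m + 1)
    rw [← R_pt D hDD m x, ← this]
    refine Finset.sum_congr rfl fun i hi => ?_
    simp only [mem_range] at hi
    have e1 : m + 1 - 1 - i = m - i := by omega
    have e2 : m - (m - i) = i := by omega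
    rw [e1, e2]
  rw [Finset.sum_range_succ] at h2
  simp only [Nat.sub_self] at h2
  exact eq_neg_of_add_eq_zero_left h2

/-- expansion of `D n` in terms of `P` -/
lemma E' (hP1 : P 1 = D 1)
    (hPrec : ∀ r : ℕ, 2 ≤ r →
      P r = D r - ∑ j ∈ Finset.Ico 1 r, (D (r - j)).comp (g.comp (P j)))
    {n : ℕ} (hn : 1 ≤ n) (x : H) :
    D n x = P n x + ∑ j ∈ Ico 1 n, D (n - j) (g (P j x)) := by
  rcases eq_or_lt_of_le hn with h | h
  · simp [← h, hP1]
  · have := congrArg (fun T : H →L[ℝ] H => T x) (hPrec n h)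
    simp only [ContinuousLinearMap.sub_apply, ContinuousLinearMap.sum_apply,
      ContinuousLinearMap.comp_apply, ContinuousLinearMap.coe_comp'] at this
    rw [this]
    abel

/-- the key identity `I1` for `D 0 ∘ P n` -/
lemma I1 (hDD : ∀ n : ℕ, ∑ i ∈ Finset.range (n + 1), (D i).comp (D (n - i)) = 0)
    (hP1 : P 1 = D 1)
    (hPrec : ∀ r : ℕ, 2 ≤ r →
      P r = D r - ∑ j ∈ Finset.Ico 1 r, (D (r - j)).comp (g.comp (P j)))
    (hPi0 : ∀ x : H, Pi0 x = x - g (D 0 x) - D 0 (g x))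
    {n : ℕ} (hn : 1 ≤ n) (x : H) :
    D 0 (P n x) = -(D n (D 0 x))
      - ∑ t ∈ Ico 1 n, D t (Pi0 (P (n - t) x) + g (D 0 (P (n - t) x))) := by
  rcases eq_or_lt_of_le hn with h | h
  · -- n = 1
    have h1 := R_pt D hDD 1 x
    simp only [Finset.sum_range_succ, Finset.sum_range_zero, zero_add] at h1
    simp only [← h, hP1, Ico_self, Finset.sum_empty, sub_zero]
    simp only [Nat.sub_self, Nat.sub_zero] at h1
    exact eq_neg_of_add_eq_zero_left h1
  · -- n ≥ 2
    have hPx := congrArg (fun T : H →L[ℝ] H => T x) (hPrec n h)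
    simp only [ContinuousLinearMap.sub_apply, ContinuousLinearMap.sum_apply,
      ContinuousLinearMap.comp_apply, ContinuousLinearMap.coe_comp'] at hPx
    have step1 : D 0 (P n x)
        = D 0 (D n x) - ∑ j ∈ Ico 1 n, D 0 (D (n - j) (g (P j x))) := by
      rw [hPx, map_sub, map_sum]
    have step2 : D 0 (D n x) = -∑ t ∈ Ico 1 (n + 1), D t (D (n - t) x) :=
      R_bot D hDD n x
    have step3 : ∑ j ∈ Ico 1 n, D 0 (D (n - j) (g (P j x)))
        = ∑ j ∈ Ico 1 n, (-∑ t ∈ Ico 1 (n + 1 - j), D t (D (n - j - t) (g (P j x)))) := by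
      refine Finset.sum_congr rfl fun j hj => ?_
      simp only [mem_Ico] at hj
      rw [R_bot D hDD (n - j) (g (P j x))]
      have e : n - j + 1 = n + 1 - j := by omega
      rw [e]
    rw [step1, step2, step3, Finset.sum_neg_distrib]
    rw [tri_swap2 n (fun j t => D t (D (n - j - t) (g (P j x))))]
    -- now: -∑_{t∈Ico 1 (n+1)} D t (D (n-t) x) + ∑_{t∈Ico 1 n} ∑_{j∈Ico 1 (n+1-t)} D t (D (n-j-t) (g (P j x)))
    rw [Finset.sum_Ico_succ_top (by omega : 1 ≤ n)]
    have inner : ∀ t ∈ Ico 1 n,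
        ∑ j ∈ Ico 1 (n + 1 - t), D t (D (n - j - t) (g (P j x)))
          = D t (D (n - t) x) - D t (Pi0 (P (n - t) x) + g (D 0 (P (n - t) x))) := by
      intro t ht
      simp only [mem_Ico] at ht
      have hnt : 1 ≤ n - t := by omega
      have hsplit : n + 1 - t = (n - t) + 1 := by omega
      rw [hsplit, Finset.sum_Ico_succ_top hnt]
      have hsum : ∑ j ∈ Ico 1 (n - t), D t (D (n - j - t) (g (P j x)))
          = D t (∑ j ∈ Ico 1 (n - t), D ((n - t) - j) (g (P j x))) := by
        rw [map_sum]
        refine Finset.sum_congr rfl fun j hj => ?_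
        have e2 : n - j - t = n - t - j := by omega
        rw [e2]
      rw [hsum]
      have hE := E' D g P hP1 hPrec hnt x
      have : ∑ j ∈ Ico 1 (n - t), D ((n - t) - j) (g (P j x)) = D (n - t) x - P (n - t) x := by
        rw [hE]; abel
      rw [this]
      have hPi : Pi0 (P (n - t) x) + g (D 0 (P (n - t) x)) = P (n - t) x - D 0 (g (P (n - t) x)) := by
        rw [hPi0]; abel
      rw [hPi]
      have hnn : n - (n - t) - t = 0 := by omega
      rw [hnn]
      simp only [map_sub]
      abel
    rw [Finset.sum_congr rfl inner]
    rw [Finset.sum_sub_distrib]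
    have hnn2 : n - n = 0 := by omega
    rw [hnn2]
    abel


lemma tri_swap4 {M : Type*} [AddCommMonoid M] (n : ℕ) (f : ℕ → ℕ → M) :
    ∑ j ∈ Ico 1 n, ∑ i ∈ Ico 1 j, f j i
      = ∑ i ∈ Ico 1 n, ∑ j ∈ Ico (i + 1) n, f j i :=
  Finset.sum_comm' (by intro x y; simp only [mem_Ico]; omega)

lemma shift_Ico {M : Type*} [AddCommMonoid M] (n i : ℕ) (F : ℕ → M) :
    ∑ j ∈ Ico (i + 1) n, F (j - i) = ∑ l ∈ Ico 1 (n - i), F l := by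
  rw [Finset.sum_Ico_eq_sum_range, Finset.sum_Ico_eq_sum_range]
  have e : n - (i + 1) = n - i - 1 := by omega
  rw [e]
  refine Finset.sum_congr rfl fun k _ => ?_
  congr 1
  omega

lemma core_L2
    (hDD : ∀ n : ℕ, ∑ i ∈ Finset.range (n + 1), (D i).comp (D (n - i)) = 0)
    (hP1 : P 1 = D 1)
    (hPrec : ∀ r : ℕ, 2 ≤ r →
      P r = D r - ∑ j ∈ Finset.Ico 1 r, (D (r - j)).comp (g.comp (P j)))
    (hPi0 : ∀ x : H, Pi0 x = x - g (D 0 x) - D 0 (g x))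
    (u : ℕ → H) (hdu : ∀ j, D 0 (u j) = 0) (N : ℕ)
    (hT : ∀ i, 1 ≤ i → i ≤ N → ∑ j ∈ range i, Pi0 (P (i - j) (u j)) = 0) :
    ∀ n, 1 ≤ n → n ≤ N → ∑ j ∈ range n, D 0 (P (n - j) (u j)) = 0 := by
  intro n
  induction n using Nat.strong_induction_on with
  | _ n IH =>
  intro h1 hN
  have expand : ∀ j ∈ range n, D 0 (P (n - j) (u j))
      = -∑ t ∈ Ico 1 (n - j), D t (Pi0 (P (n - j - t) (u j)) + g (D 0 (P (n - j - t) (u j)))) := by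
    intro j hj
    simp only [mem_range] at hj
    rw [I1 D g P Pi0 hDD hP1 hPrec hPi0 (by omega : 1 ≤ n - j) (u j), hdu j, map_zero,
      neg_zero, zero_sub]
  rw [Finset.sum_congr rfl expand, Finset.sum_neg_distrib]
  rw [tri_swap3 n (fun j t => D t (Pi0 (P (n - j - t) (u j)) + g (D 0 (P (n - j - t) (u j)))))]
  have inner0 : ∀ t ∈ Ico 1 n,
      ∑ j ∈ range (n - t), D t (Pi0 (P (n - j - t) (u j)) + g (D 0 (P (n - j - t) (u j)))) = 0 := by
    intro t ht
    simp only [mem_Ico] at ht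
    have h1t : 1 ≤ n - t := by omega
    have hTm := hT (n - t) h1t (by omega)
    have hL2 := IH (n - t) (by omega) h1t (by omega)
    have step : ∑ j ∈ range (n - t), D t (Pi0 (P (n - j - t) (u j)) + g (D 0 (P (n - j - t) (u j))))
        = D t (∑ j ∈ range (n - t), (Pi0 (P (n - t - j) (u j)) + g (D 0 (P (n - t - j) (u j))))) := by
      rw [map_sum]
      refine Finset.sum_congr rfl fun j _ => ?_
      have e : n - j - t = n - t - j := by omega
      rw [e]
    rw [step, Finset.sum_add_distrib, hTm, ← map_sum g, hL2, map_zero, add_zero, map_zero]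
  rw [Finset.sum_congr rfl inner0, Finset.sum_const_zero, neg_zero]

lemma core_star
    (hDD : ∀ n : ℕ, ∑ i ∈ Finset.range (n + 1), (D i).comp (D (n - i)) = 0)
    (hP1 : P 1 = D 1)
    (hPrec : ∀ r : ℕ, 2 ≤ r →
      P r = D r - ∑ j ∈ Finset.Ico 1 r, (D (r - j)).comp (g.comp (P j)))
    (hPi0 : ∀ x : H, Pi0 x = x - g (D 0 x) - D 0 (g x))
    (u : ℕ → H) (hdu : ∀ j, D 0 (u j) = 0) (N : ℕ)
    (hT : ∀ i, 1 ≤ i → i ≤ N → ∑ j ∈ range i, Pi0 (P (i - j) (u j)) = 0) :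
    ∀ n, 1 ≤ n → n ≤ N →
      D n (u 0) = ∑ i ∈ range n,
        D i (∑ j ∈ range (n - i), g (P (n - i - j) (u j)) - u (n - i)) := by
  intro n h1 hN
  have hsub : ∀ i ∈ range n,
      D i (∑ j ∈ range (n - i), g (P (n - i - j) (u j)) - u (n - i))
        = ∑ j ∈ range (n - i), D i (g (P (n - i - j) (u j))) - D i (u (n - i)) := by
    intro i _
    rw [map_sub, map_sum]
  rw [Finset.sum_congr rfl hsub, Finset.sum_sub_distrib]
  -- S1
  have hS1 : ∑ i ∈ range n, ∑ j ∈ range (n - i), D i (g (P (n - i - j) (u j)))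
      = ∑ j ∈ range n, (D 0 (g (P (n - j) (u j))) + (D (n - j) (u j) - P (n - j) (u j))) := by
    rw [tri_swap0 n (fun i j => D i (g (P (n - i - j) (u j))))]
    refine Finset.sum_congr rfl fun j hj => ?_
    simp only [mem_range] at hj
    have hm : 1 ≤ n - j := by omega
    rw [range_eq_Ico, Finset.sum_eq_sum_Ico_succ_bot (by omega : 0 < n - j)]
    have e0 : n - 0 - j = n - j := by omega
    rw [e0]
    congr 1
    have refl1 : ∑ i ∈ Ico (0 + 1) (n - j), D i (g (P (n - i - j) (u j)))
        = ∑ i ∈ Ico 1 (n - j), D ((n - j) - i) (g (P i (u j))) := by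
      rw [zero_add]
      have hrf := Finset.sum_Ico_reflect (fun i => D i (g (P (n - i - j) (u j)))) 1
        (by omega : n - j ≤ (n - j) + 1)
      have eb1 : (n - j) + 1 - (n - j) = 1 := by omega
      have eb2 : (n - j) + 1 - 1 = n - j := by omega
      rw [eb1, eb2] at hrf
      rw [← hrf]
      refine Finset.sum_congr rfl fun i hi => ?_
      simp only [mem_Ico] at hi
      have e1 : n - (n - j - i) - j = i := by omega
      simp only [e1]
    rw [refl1]
    have hE := E' D g P hP1 hPrec hm (u j)
    rw [eq_sub_iff_add_eq, hE]
    abel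
  rw [hS1]
  -- S2
  have hS2 : ∑ i ∈ range n, D i (u (n - i))
      = ∑ j ∈ range n, D (n - j) (u j) - D n (u 0) := by
    rw [range_eq_Ico, Finset.sum_eq_sum_Ico_succ_bot (by omega : 0 < n)]
    have e0 : n - 0 = n := by omega
    rw [e0, hdu n, zero_add]
    have refl2 : ∑ i ∈ Ico (0 + 1) n, D i (u (n - i))
        = ∑ i ∈ Ico 1 n, D (n - i) (u i) := by
      rw [zero_add]
      have hrf := Finset.sum_Ico_reflect (fun i => D i (u (n - i))) 1
        (by omega : n ≤ n + 1)
      have eb1 : n + 1 - n = 1 := by omega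
      have eb2 : n + 1 - 1 = n := by omega
      rw [eb1, eb2] at hrf
      rw [← hrf]
      refine Finset.sum_congr rfl fun i hi => ?_
      simp only [mem_Ico] at hi
      have e1 : n - (n - i) = i := by omega
      simp only [e1]
    rw [refl2, ← range_eq_Ico]
    rw [range_eq_Ico, Finset.sum_eq_sum_Ico_succ_bot (by omega : 0 < n)]
    have e2 : n - 0 = n := by omega
    rw [e2]
    abel
  rw [hS2]
  -- combine
  have hkey : ∑ j ∈ range n, (D 0 (g (P (n - j) (u j))) + (D (n - j) (u j) - P (n - j) (u j)))
      = ∑ j ∈ range n, D (n - j) (u j)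
        - ∑ j ∈ range n, (Pi0 (P (n - j) (u j)) + g (D 0 (P (n - j) (u j)))) := by
    rw [← Finset.sum_sub_distrib]
    refine Finset.sum_congr rfl fun j _ => ?_
    rw [hPi0]
    abel
  rw [hkey, Finset.sum_add_distrib, hT n h1 hN, ← map_sum g,
    core_L2 D g P Pi0 hDD hP1 hPrec hPi0 u hdu N hT n h1 hN, map_zero]
  abel


lemma core_fwd
    (hDD : ∀ n : ℕ, ∑ i ∈ Finset.range (n + 1), (D i).comp (D (n - i)) = 0)
    (hP1 : P 1 = D 1)
    (hPrec : ∀ r : ℕ, 2 ≤ r →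
      P r = D r - ∑ j ∈ Finset.Ico 1 r, (D (r - j)).comp (g.comp (P j)))
    (hPi0 : ∀ x : H, Pi0 x = x - g (D 0 x) - D 0 (g x))
    (α : H) (z : ℕ → H) (N : ℕ)
    (hstar : ∀ n, 1 ≤ n → n ≤ N → D n α = ∑ i ∈ range n, D i (z (n - i))) :
    ∀ n, 1 ≤ n → n ≤ N →
      P n α = D 0 (W D g z n) + ∑ j ∈ Ico 1 n, P (n - j) (Pi0 (W D g z j)) := by
  intro n
  induction n using Nat.strong_induction_on with
  | _ n IH =>
  intro h1 hN
  rcases eq_or_lt_of_le h1 with h | h2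
  · -- n = 1
    have hn1 : n = 1 := h.symm
    subst hn1
    simp only [Ico_self, Finset.sum_empty, add_zero]
    rw [hP1, hstar 1 le_rfl hN, W_eq]
    simp
  · -- n ≥ 2
    have hPx := congrArg (fun T : H →L[ℝ] H => T α) (hPrec n h2)
    simp only [ContinuousLinearMap.sub_apply, ContinuousLinearMap.sum_apply,
      ContinuousLinearMap.comp_apply, ContinuousLinearMap.coe_comp'] at hPx
    have hDn : D n α = D 0 (z n) + ∑ j ∈ Ico 1 n, D (n - j) (z j) := by
      rw [hstar n h1 hN, range_eq_Ico, Finset.sum_eq_sum_Ico_succ_bot (by omega : 0 < n)]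
      have e0 : n - 0 = n := by omega
      rw [e0, zero_add]
      congr 1
      have hrf := Finset.sum_Ico_reflect (fun i => D i (z (n - i))) 1 (by omega : n ≤ n + 1)
      have eb1 : n + 1 - n = 1 := by omega
      have eb2 : n + 1 - 1 = n := by omega
      rw [eb1, eb2] at hrf
      rw [← hrf]
      refine Finset.sum_congr rfl fun i hi => ?_
      simp only [mem_Ico] at hi
      have e1 : n - (n - i) = i := by omega
      simp only [e1]
    have hterm : ∀ j ∈ Ico 1 n,
        D (n - j) (z j) - D (n - j) (g (P j α))
          = D (n - j) (Pi0 (W D g z j)) + D (n - j) (D 0 (g (W D g z j)))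
            + ∑ i ∈ Ico 1 j, D (n - j) (D (j - i) (g (W D g z i)))
            - ∑ i ∈ Ico 1 j, D (n - j) (g (P (j - i) (Pi0 (W D g z i)))) := by
      intro j hj
      simp only [mem_Ico] at hj
      have hIH := IH j (by omega) (by omega) (by omega)
      have hz : z j = W D g z j + ∑ i ∈ Ico 1 j, D (j - i) (g (W D g z i)) := by
        rw [W_eq]; abel
      have e3 : z j - g (P j α)
          = Pi0 (W D g z j) + D 0 (g (W D g z j))
            + ∑ i ∈ Ico 1 j, D (j - i) (g (W D g z i))
            - ∑ i ∈ Ico 1 j, g (P (j - i) (Pi0 (W D g z i))) := by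
        rw [hIH, map_add, map_sum, hPi0 (W D g z j)]
        nth_rewrite 1 [hz]
        abel
      rw [← map_sub, e3]
      simp only [map_add, map_sub, map_sum]
    rw [hPx, hDn, add_sub_assoc, ← Finset.sum_sub_distrib, Finset.sum_congr rfl hterm]
    simp only [Finset.sum_add_distrib, Finset.sum_sub_distrib]
    -- now : D 0 (z n) + (A + B + C - E) = D 0 (w n) + ∑ P (n-j) (Pi0 (w j))
    have claim1 : D 0 (z n)
        + (∑ j ∈ Ico 1 n, D (n - j) (D 0 (g (W D g z j)))
          + ∑ j ∈ Ico 1 n, ∑ i ∈ Ico 1 j, D (n - j) (D (j - i) (g (W D g z i))))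
        = D 0 (W D g z n) := by
      rw [tri_swap4 n (fun j i => D (n - j) (D (j - i) (g (W D g z i))))]
      have hshift : ∀ i ∈ Ico 1 n,
          ∑ j ∈ Ico (i + 1) n, D (n - j) (D (j - i) (g (W D g z i)))
            = ∑ l ∈ Ico 1 (n - i), D ((n - i) - l) (D l (g (W D g z i))) := by
        intro i hi
        simp only [mem_Ico] at hi
        rw [← shift_Ico n i (fun l => D ((n - i) - l) (D l (g (W D g z i))))]
        refine Finset.sum_congr rfl fun j hj => ?_
        simp only [mem_Ico] at hj
        have e1 : n - i - (j - i) = n - j := by omega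
        simp only [e1]
      rw [Finset.sum_congr rfl hshift, ← Finset.sum_add_distrib]
      have hcol : ∀ i ∈ Ico 1 n,
          D (n - i) (D 0 (g (W D g z i)))
            + ∑ l ∈ Ico 1 (n - i), D ((n - i) - l) (D l (g (W D g z i)))
          = -(D 0 (D (n - i) (g (W D g z i)))) := by
        intro i hi
        simp only [mem_Ico] at hi
        have hb : ∑ l ∈ range (n - i), D ((n - i) - l) (D l (g (W D g z i)))
            = -(D 0 (D (n - i) (g (W D g z i)))) := R_top D hDD (n - i) (g (W D g z i))
        rw [range_eq_Ico, Finset.sum_eq_sum_Ico_succ_bot (by omega : 0 < n - i)] at hb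
        have e0 : n - i - 0 = n - i := by omega
        rw [e0, zero_add] at hb
        rw [← hb]
      rw [Finset.sum_congr rfl hcol, W_eq D g z n, map_sub, map_sum]
      rw [Finset.sum_neg_distrib]
      abel
    have claim2 : ∑ j ∈ Ico 1 n, D (n - j) (Pi0 (W D g z j))
        - ∑ j ∈ Ico 1 n, ∑ i ∈ Ico 1 j, D (n - j) (g (P (j - i) (Pi0 (W D g z i))))
        = ∑ j ∈ Ico 1 n, P (n - j) (Pi0 (W D g z j)) := by
      have hA : ∀ j ∈ Ico 1 n,
          D (n - j) (Pi0 (W D g z j))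
            = P (n - j) (Pi0 (W D g z j))
              + ∑ t ∈ Ico 1 (n - j), D ((n - j) - t) (g (P t (Pi0 (W D g z j)))) := by
        intro j hj
        simp only [mem_Ico] at hj
        exact E' D g P hP1 hPrec (by omega : 1 ≤ n - j) (Pi0 (W D g z j))
      rw [Finset.sum_congr rfl hA, Finset.sum_add_distrib]
      rw [tri_swap4 n (fun j i => D (n - j) (g (P (j - i) (Pi0 (W D g z i)))))]
      have hshift2 : ∀ i ∈ Ico 1 n,
          ∑ j ∈ Ico (i + 1) n, D (n - j) (g (P (j - i) (Pi0 (W D g z i))))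
            = ∑ l ∈ Ico 1 (n - i), D ((n - i) - l) (g (P l (Pi0 (W D g z i)))) := by
        intro i hi
        simp only [mem_Ico] at hi
        rw [← shift_Ico n i (fun l => D ((n - i) - l) (g (P l (Pi0 (W D g z i)))))]
        refine Finset.sum_congr rfl fun j hj => ?_
        simp only [mem_Ico] at hj
        have e1 : n - i - (j - i) = n - j := by omega
        simp only [e1]
      rw [Finset.sum_congr rfl hshift2]
      abel
    rw [← claim2]
    rw [← claim1]
    abel


lemma P_deg (Hgr : ℤ × ℤ → Submodule ℝ H)
    (hDdeg : ∀ (i : ℕ) (a b : ℤ), ∀ x ∈ Hgr (a, b), D i x ∈ Hgr (a + (i : ℤ), b + 1 - (i : ℤ)))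
    (hgdeg : ∀ (a b : ℤ), ∀ x ∈ Hgr (a, b), g x ∈ Hgr (a, b - 1))
    (hP1 : P 1 = D 1)
    (hPrec : ∀ r : ℕ, 2 ≤ r →
      P r = D r - ∑ j ∈ Finset.Ico 1 r, (D (r - j)).comp (g.comp (P j))) :
    ∀ n : ℕ, 1 ≤ n → ∀ (a b : ℤ) (x : H), x ∈ Hgr (a, b) →
      P n x ∈ Hgr (a + (n : ℤ), b + 1 - (n : ℤ)) := by
  intro n
  induction n using Nat.strong_induction_on with
  | _ n IH =>
  intro h1 a b x hx
  rcases eq_or_lt_of_le h1 with h | h2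
  · have hn1 : n = 1 := h.symm
    subst hn1
    rw [hP1]
    exact hDdeg 1 a b x hx
  · have hPx := congrArg (fun T : H →L[ℝ] H => T x) (hPrec n h2)
    simp only [ContinuousLinearMap.sub_apply, ContinuousLinearMap.sum_apply,
      ContinuousLinearMap.comp_apply, ContinuousLinearMap.coe_comp'] at hPx
    rw [hPx]
    apply Submodule.sub_mem
    · exact hDdeg n a b x hx
    · apply Submodule.sum_mem
      intro j hj
      simp only [mem_Ico] at hj
      have hPj := IH j (by omega) (by omega) a b x hx
      have hgj := hgdeg _ _ _ hPj
      have hDj := hDdeg (n - j) _ _ _ hgj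
      have e : ((a + (j : ℤ)) + ((n - j : ℕ) : ℤ), b + 1 - (j : ℤ) - 1 + 1 - ((n - j : ℕ) : ℤ))
          = (a + (n : ℤ), b + 1 - (n : ℤ)) := by
        simp only [Prod.mk.injEq]
        constructor <;> omega
      rwa [e] at hDj

lemma W_deg (Hgr : ℤ × ℤ → Submodule ℝ H)
    (hDdeg : ∀ (i : ℕ) (a b : ℤ), ∀ x ∈ Hgr (a, b), D i x ∈ Hgr (a + (i : ℤ), b + 1 - (i : ℤ)))
    (hgdeg : ∀ (a b : ℤ), ∀ x ∈ Hgr (a, b), g x ∈ Hgr (a, b - 1))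
    (p k : ℤ) (N : ℕ) (z : ℕ → H)
    (hz : ∀ j, 1 ≤ j → j ≤ N → z j ∈ Hgr (p + (j : ℤ), k - p - (j : ℤ))) :
    ∀ m : ℕ, 1 ≤ m → m ≤ N → W D g z m ∈ Hgr (p + (m : ℤ), k - p - (m : ℤ)) := by
  intro m
  induction m using Nat.strong_induction_on with
  | _ m IH =>
  intro h1 hN
  rw [W_eq]
  apply Submodule.sub_mem
  · exact hz m h1 hN
  · apply Submodule.sum_mem
    intro i hi
    simp only [mem_Ico] at hi
    have hWi := IH i (by omega) (by omega) (by omega)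
    have hgi := hgdeg _ _ _ hWi
    have hDi := hDdeg (m - i) _ _ _ hgi
    have e : ((p + (i : ℤ)) + ((m - i : ℕ) : ℤ), k - p - (i : ℤ) - 1 + 1 - ((m - i : ℕ) : ℤ))
        = (p + (m : ℤ), k - p - (m : ℤ)) := by
      simp only [Prod.mk.injEq]
      constructor <;> omega
    rwa [e] at hDi

end MemZAux

/-- `α ∈ Z_r^{p,k}` for the spectral sequence of a multicomplex of Hilbert spaces. -/
def MemZ {H : Type*} [NormedAddCommGroup H] [InnerProductSpace ℝ H]
    (Hgr : ℤ × ℤ → Submodule ℝ H) (D : ℕ → H →L[ℝ] H)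
    (r : ℕ) (p k : ℤ) (α : H) : Prop :=
  α ∈ Hgr (p, k - p) ∧ D 0 α = 0 ∧
    ∃ z : ℕ → H,
      (∀ j : ℕ, 1 ≤ j → j ≤ r - 1 → z j ∈ Hgr (p + (j : ℤ), k - p - (j : ℤ))) ∧
      (∀ n : ℕ, 1 ≤ n → n ≤ r - 1 → D n α = ∑ i ∈ Finset.range n, D i (z (n - i)))

/-- **Characterisation of the spaces `Z_r^{p,k}` in terms of Rumin forms and the Rumin
differentials** (Proposition 3.9 of the paper).  For `r ≥ 2` and `α ∈ H_{p,k−p}`: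
`α ∈ Z_r^{p,k}` iff `α = d₀β + Π₀α` for some `β ∈ H_{p,k−p−1}`, and there exist harmonic
elements `ω̄_{p+i} ∈ ker d₀ ∩ ker d₀* ∩ H_{p+i,k−p−i}` for `i = 1, …, r−2` such that
`d_c^i(Π₀α) = ∑_{j=1}^{i−1} d_c^{i−j}(ω̄_{p+j})` for each `i = 1, …, r−1`. -/
theorem memZ_iff_rumin
    {H : Type*} [NormedAddCommGroup H] [InnerProductSpace ℝ H] [CompleteSpace H]
    (Hgr : ℤ × ℤ → Submodule ℝ H)
    (hinternal : DirectSum.IsInternal Hgr)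
    (hclosed : ∀ ab : ℤ × ℤ, IsClosed (Hgr ab : Set H))
    (horth : ∀ ab cd : ℤ × ℤ, ab ≠ cd → ∀ x ∈ Hgr ab, ∀ y ∈ Hgr cd, ⟪x, y⟫_ℝ = 0)
    (hfin : {ab : ℤ × ℤ | Hgr ab ≠ ⊥}.Finite)
    (s : ℕ) (D : ℕ → H →L[ℝ] H)
    (hDvan : ∀ i : ℕ, s ≤ i → D i = 0)
    (hDdeg : ∀ (i : ℕ) (a b : ℤ), ∀ x ∈ Hgr (a, b), D i x ∈ Hgr (a + (i : ℤ), b + 1 - (i : ℤ)))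
    (hDD : ∀ n : ℕ, ∑ i ∈ Finset.range (n + 1), (D i).comp (D (n - i)) = 0)
    (hd0closed : IsClosed (LinearMap.range (D 0 : H →ₗ[ℝ] H) : Set H))
    (g : H →L[ℝ] H)
    (hdg_perp : ∀ x : H, x - D 0 (g x) ∈ (LinearMap.range (D 0 : H →ₗ[ℝ] H))ᗮ)
    (hgd_mem : ∀ x : H, g (D 0 x) ∈ (LinearMap.ker (D 0 : H →ₗ[ℝ] H))ᗮ)
    (hgd_perp : ∀ x : H, x - g (D 0 x) ∈ ((LinearMap.ker (D 0 : H →ₗ[ℝ] H))ᗮ)ᗮ)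
    (hgvan : ∀ x ∈ (LinearMap.range (D 0 : H →ₗ[ℝ] H))ᗮ, g x = 0)
    (hgdeg : ∀ (a b : ℤ), ∀ x ∈ Hgr (a, b), g x ∈ Hgr (a, b - 1))
    (P : ℕ → H →L[ℝ] H) (hP1 : P 1 = D 1)
    (hPrec : ∀ r : ℕ, 2 ≤ r →
      P r = D r - ∑ j ∈ Finset.Ico 1 r, (D (r - j)).comp (g.comp (P j)))
    (dc : ℕ → H →L[ℝ] H)
    (hdc : ∀ r : ℕ, dc r = P r - g.comp ((D 0).comp (P r)) - (D 0).comp (g.comp (P r)))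
    (Pi0 : H →L[ℝ] H)
    (hPi0 : ∀ x : H, Pi0 x = x - g (D 0 x) - D 0 (g x))
    (r : ℕ) (hr : 2 ≤ r) (p k : ℤ) (α : H) (hα : α ∈ Hgr (p, k - p)) :
    MemZ Hgr D r p k α ↔
      (∃ β ∈ Hgr (p, k - p - 1), α = D 0 β + Pi0 α) ∧
      ∃ ω : ℕ → H,
        (∀ i : ℕ, 1 ≤ i → i ≤ r - 2 →
          D 0 (ω i) = 0 ∧ ContinuousLinearMap.adjoint (D 0) (ω i) = 0 ∧
            ω i ∈ Hgr (p + (i : ℤ), k - p - (i : ℤ))) ∧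
        (∀ i : ℕ, 1 ≤ i → i ≤ r - 1 →
          dc i (Pi0 α) = ∑ j ∈ Finset.Ico 1 i, dc (i - j) (ω j)) := by
  classical
  have hB1 : ∀ x : H, D 0 (D 0 x) = 0 := by
    intro x
    have := congrArg (fun T : H →L[ℝ] H => T x) (hDD 0)
    simpa using this
  have hrange_le : LinearMap.range (D 0 : H →ₗ[ℝ] H) ≤ LinearMap.ker (D 0 : H →ₗ[ℝ] H) := by
    rintro y ⟨x, rfl⟩
    exact hB1 x
  have hker_closed : IsClosed ((LinearMap.ker (D 0 : H →ₗ[ℝ] H) : Submodule ℝ H) : Set H) :=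
    ContinuousLinearMap.isClosed_ker (D 0)
  haveI : CompleteSpace (LinearMap.ker (D 0 : H →ₗ[ℝ] H) : Submodule ℝ H) := hker_closed.completeSpace_coe
  have hB2 : ∀ x : H, D 0 (g (D 0 x)) = D 0 x := by
    intro x
    have hmem : x - g (D 0 x) ∈ LinearMap.ker (D 0 : H →ₗ[ℝ] H) := by
      have h := hgd_perp x
      rwa [Submodule.orthogonal_orthogonal] at h
    have h0 : D 0 (x - g (D 0 x)) = 0 := hmem
    rw [map_sub] at h0
    exact (sub_eq_zero.mp h0).symm
  have hB3 : ∀ x : H, g (D 0 (g x)) = g x := by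
    intro x
    have h0 := hgvan _ (hdg_perp x)
    rw [map_sub] at h0
    exact (sub_eq_zero.mp h0).symm
  have hB4 : ∀ x : H, g (g x) = 0 := by
    intro x
    apply hgvan
    have h1 : g x ∈ (LinearMap.ker (D 0 : H →ₗ[ℝ] H))ᗮ := by
      rw [← hB3 x]; exact hgd_mem (g x)
    exact Submodule.orthogonal_le hrange_le h1
  have hd0Pi0 : ∀ x : H, D 0 (Pi0 x) = 0 := by
    intro x
    rw [hPi0, map_sub, map_sub, hB2, sub_self, zero_sub, hB1, neg_zero]
  have hPi0d0 : ∀ x : H, Pi0 (D 0 x) = 0 := by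
    intro x
    rw [hPi0, hB1, map_zero, sub_zero, hB2, sub_self]
  have hPi0_perp : ∀ x : H, Pi0 x ∈ (LinearMap.range (D 0 : H →ₗ[ℝ] H))ᗮ := by
    intro x
    rw [hPi0]
    have h1 := hdg_perp x
    have h2 : g (D 0 x) ∈ (LinearMap.range (D 0 : H →ₗ[ℝ] H))ᗮ :=
      Submodule.orthogonal_le hrange_le (hgd_mem x)
    have e : x - g (D 0 x) - D 0 (g x) = (x - D 0 (g x)) - g (D 0 x) := by abel
    rw [e]
    exact Submodule.sub_mem _ h1 h2
  have hadj : ∀ x : H, x ∈ (LinearMap.range (D 0 : H →ₗ[ℝ] H))ᗮ →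
      ContinuousLinearMap.adjoint (D 0) x = 0 := by
    intro x hx
    have h0 : ∀ y : H, ⟪x, D 0 y⟫_ℝ = 0 := by
      intro y
      rw [real_inner_comm]
      exact hx _ ⟨y, rfl⟩
    have h1 : ⟪ContinuousLinearMap.adjoint (D 0) x, ContinuousLinearMap.adjoint (D 0) x⟫_ℝ = 0 := by
      rw [ContinuousLinearMap.adjoint_inner_left]
      exact h0 _
    exact inner_self_eq_zero.mp h1
  have hdc_pt : ∀ (m : ℕ) (x : H), dc m x = Pi0 (P m x) := by
    intro m x
    have h := congrArg (fun T : H →L[ℝ] H => T x) (hdc m)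
    simp only [ContinuousLinearMap.sub_apply, ContinuousLinearMap.comp_apply,
      ContinuousLinearMap.coe_comp'] at h
    rw [h, hPi0]
  have hD0deg : ∀ (a b : ℤ) (x : H), x ∈ Hgr (a, b) → D 0 x ∈ Hgr (a, b + 1) := by
    intro a b x hx
    have h := hDdeg 0 a b x hx
    simpa using h
  have hPi0deg : ∀ (a b : ℤ) (x : H), x ∈ Hgr (a, b) → Pi0 x ∈ Hgr (a, b) := by
    intro a b x hx
    rw [hPi0]
    have h1 := hgdeg _ _ _ (hD0deg a b x hx)
    have e1 : (b : ℤ) + 1 - 1 = b := by ring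
    rw [e1] at h1
    have h2 := hD0deg _ _ _ (hgdeg a b x hx)
    have e2 : (b : ℤ) - 1 + 1 = b := by ring
    rw [e2] at h2
    exact Submodule.sub_mem _ (Submodule.sub_mem _ hx h1) h2
  have hN1 : 1 ≤ r - 1 := by omega
  constructor
  · rintro ⟨hmem, hd0α, z, hzdeg, hstar⟩
    have hβ : α = D 0 (g α) + Pi0 α := by
      rw [hPi0 α, hd0α, map_zero]
      abel
    refine ⟨⟨g α, hgdeg p (k - p) α hα, hβ⟩, ?_⟩
    set z' : ℕ → H := fun m => z m + D m (g α) with hz'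
    have hstar' : ∀ n, 1 ≤ n → n ≤ r - 1 →
        D n (Pi0 α) = ∑ i ∈ Finset.range n, D i (z' (n - i)) := by
      intro n hn1 hnN
      have hPα : Pi0 α = α - D 0 (g α) := by
        rw [hPi0, hd0α, map_zero]
        abel
      rw [hPα, map_sub, hstar n hn1 hnN]
      have htop : ∑ i ∈ Finset.range n, D i (D (n - i) (g α)) + D n (D 0 (g α)) = 0 := by
        have h := MemZAux.R_pt D hDD n (g α)
        rw [Finset.sum_range_succ] at h
        simpa using h
      have hDn : D n (D 0 (g α)) = -∑ i ∈ Finset.range n, D i (D (n - i) (g α)) :=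
        eq_neg_of_add_eq_zero_right htop
      rw [hDn, sub_neg_eq_add, ← Finset.sum_add_distrib]
      refine Finset.sum_congr rfl fun i _ => ?_
      rw [← map_add]
    refine ⟨fun j => Pi0 (MemZAux.W D g z' j), ?_, ?_⟩
    · intro i hi1 hi2
      refine ⟨hd0Pi0 _, hadj _ (hPi0_perp _), ?_⟩
      have hz'deg : ∀ j, 1 ≤ j → j ≤ r - 1 → z' j ∈ Hgr (p + (j : ℤ), k - p - (j : ℤ)) := by
        intro j hj1 hj2
        apply Submodule.add_mem _ (hzdeg j hj1 hj2)
        have hgα : g α ∈ Hgr (p, k - p - 1) := hgdeg _ _ _ hα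
        have h := hDdeg j p (k - p - 1) _ hgα
        have e : (k : ℤ) - p - 1 + 1 - j = k - p - j := by ring
        rwa [e] at h
      have hWdeg := MemZAux.W_deg D g Hgr hDdeg hgdeg p k (r - 1) z' hz'deg i hi1 (by omega)
      exact hPi0deg _ _ _ hWdeg
    · intro i hi1 hi2
      have hG := MemZAux.core_fwd D g P Pi0 hDD hP1 hPrec hPi0 (Pi0 α) z' (r - 1)
        hstar' i hi1 hi2
      rw [hdc_pt, hG, map_add, hPi0d0, zero_add, map_sum]
      refine Finset.sum_congr rfl fun j _ => ?_
      rw [hdc_pt]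
  · rintro ⟨⟨β, hβmem, hβeq⟩, ω, hω1, hω2⟩
    have hd0α : D 0 α = 0 := by
      rw [hβeq, map_add, hB1, hd0Pi0, add_zero]
    refine ⟨hα, hd0α, ?_⟩
    set u : ℕ → H := fun j => if j = 0 then Pi0 α else if j ≤ r - 2 then -ω j else 0 with hu
    have hu0 : u 0 = Pi0 α := by simp [hu]
    have hdu : ∀ j, D 0 (u j) = 0 := by
      intro j
      simp only [hu]
      split_ifs with h1 h2
      · exact hd0Pi0 α
      · rw [map_neg, (hω1 j (by omega) h2).1, neg_zero]
      · simp
    have hT : ∀ i, 1 ≤ i → i ≤ r - 1 →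
        ∑ j ∈ Finset.range i, Pi0 (P (i - j) (u j)) = 0 := by
      intro i hi1 hiN
      rw [Finset.range_eq_Ico, Finset.sum_eq_sum_Ico_succ_bot (by omega : 0 < i)]
      have e0 : i - 0 = i := by omega
      rw [e0, hu0, zero_add]
      have hrest : ∀ j ∈ Finset.Ico 1 i, Pi0 (P (i - j) (u j)) = -(dc (i - j) (ω j)) := by
        intro j hj
        simp only [Finset.mem_Ico] at hj
        have hj2 : j ≤ r - 2 := by omega
        have huj : u j = -ω j := by
          simp only [hu]
          rw [if_neg (by omega), if_pos hj2]
        rw [huj, map_neg, map_neg, hdc_pt]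
      rw [Finset.sum_congr rfl hrest, Finset.sum_neg_distrib, ← hdc_pt,
        hω2 i hi1 hiN]
      exact add_neg_cancel _
    have hudeg : ∀ j : ℕ, u j ∈ Hgr (p + (j : ℤ), k - p - (j : ℤ)) := by
      intro j
      simp only [hu]
      split_ifs with h1 h2
      · subst h1
        simpa using hPi0deg p (k - p) α hα
      · exact Submodule.neg_mem _ (hω1 j (by omega) h2).2.2
      · exact Submodule.zero_mem _
    refine ⟨fun m => (∑ j ∈ Finset.range m, g (P (m - j) (u j)) - u m) - D m β, ?_, ?_⟩
    · intro j hj1 hjN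
      apply Submodule.sub_mem
      · apply Submodule.sub_mem
        · apply Submodule.sum_mem
          intro i hi
          simp only [Finset.mem_range] at hi
          have hP := MemZAux.P_deg D g P Hgr hDdeg hgdeg hP1 hPrec (j - i) (by omega)
            (p + (i : ℤ)) (k - p - (i : ℤ)) (u i) (hudeg i)
          have hg := hgdeg _ _ _ hP
          have e : ((p + (i : ℤ)) + ((j - i : ℕ) : ℤ),
              k - p - (i : ℤ) + 1 - ((j - i : ℕ) : ℤ) - 1) = (p + (j : ℤ), k - p - (j : ℤ)) := by
            simp only [Prod.mk.injEq]
            constructor <;> omega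
          rwa [e] at hg
        · exact hudeg j
      · have h := hDdeg j p (k - p - 1) β hβmem
        have e : (k : ℤ) - p - 1 + 1 - j = k - p - j := by ring
        rwa [e] at h
    · intro n hn1 hnN
      have hst := MemZAux.core_star D g P Pi0 hDD hP1 hPrec hPi0 u hdu (r - 1) hT n hn1 hnN
      have hαsplit : D n α = D n (D 0 β) + D n (Pi0 α) := by
        rw [← map_add, ← hβeq]
      have htop : ∑ i ∈ Finset.range n, D i (D (n - i) β) + D n (D 0 β) = 0 := by
        have h := MemZAux.R_pt D hDD n β
        rw [Finset.sum_range_succ] at h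
        simpa using h
      have hDn : D n (D 0 β) = -∑ i ∈ Finset.range n, D i (D (n - i) β) :=
        eq_neg_of_add_eq_zero_right htop
      rw [hαsplit, hDn, ← hu0, hst]
      have hsplit : ∀ i ∈ Finset.range n,
          D i (∑ j ∈ Finset.range (n - i), g (P (n - i - j) (u j)) - u (n - i) - D (n - i) β)
            = D i (∑ j ∈ Finset.range (n - i), g (P (n - i - j) (u j)) - u (n - i))
              - D i (D (n - i) β) := fun i _ => map_sub _ _ _
      rw [Finset.sum_congr rfl hsplit, Finset.sum_sub_distrib]
      abel
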